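/- For a strictly positive distribution satisfying the composition property, if B = {X_1, ..., X_k} is a nonempty minimal subset of V \ {X} with Y ⫫̸ X | B for a relevant variable X, then the elements of B can be ordered into a sequence X'_1, ..., X'_k such that deg(X'_i) < i for every i = 1, ..., k. -/
import Mathlib

/-- A nodup list's element at position `j` does not occur in the prefix of length `j`. -/
lemma get_not_mem_take_of_nodup {α : Type*} (l : List α) (h : l.Nodup) (j : ℕ)
    (hj : j < l.length) : l.get ⟨j, hj⟩ ∉ l.take j := by
  intro hmem
  obtain ⟨i, hi, hget⟩ := List.getElem_of_mem hmem
  have hij : i < j := lt_of_lt_of_le hi (by simp [List.length_take])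
  rw [List.getElem_take] at hget
  exact absurd (List.Nodup.getElem_inj_iff h |>.mp (by simpa using hget)) (by omega)

/-- For a strictly positive distribution satisfying composition (strict
positivity entering through the intersection axiom), if `B` is a nonempty minimal subset
of `V \ {X}` with `Y ⫫̸ X | B` for a relevant variable `X`, then the elements of `B` can
be ordered into a sequence `X'_1, …, X'_k` (here a nodup list, 0-indexed) such that
`deg(X'_i) < i` for every `i = 1, …, k`, i.e. the variable at 0-based position `j` admits
a conditioning set of size at most `j` making it dependent on the output `y`. -/
theorem minimal_conditioning_chain_of_PC
    {ι : Type*} [Fintype ι] [DecidableEq ι]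
    (CI : Finset ι → Finset ι → Finset ι → Prop)
    (symm : ∀ S T R, CI S T R → CI T S R)
    (decomp : ∀ S T U R, CI S (T ∪ U) R → CI S T R)
    (weakUnion : ∀ S T U R, CI S (T ∪ U) R → CI S T (R ∪ U))
    (contraction : ∀ S T U R, CI S T R → CI S U (R ∪ T) → CI S (T ∪ U) R)
    (composition : ∀ S T U R, CI S T R → CI S U R → CI S (T ∪ U) R)
    (intersection : ∀ S T U R, CI S T (R ∪ U) → CI S U (R ∪ T) → CI S (T ∪ U) R)
    (y X : ι) (hXy : X ≠ y)
    (B : Finset ι) (hBne : B.Nonempty) (hB : B ⊆ (Finset.univ.erase y).erase X)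
    (hdep : ¬ CI {y} {X} B)
    (hmin : ∀ B' ⊂ B, CI {y} {X} B') :
    ∃ l : List ι, l.Nodup ∧ l.toFinset = B ∧
      ∀ (j : ℕ) (hj : j < l.length),
        ∃ B' ⊆ (Finset.univ.erase y).erase (l.get ⟨j, hj⟩),
          B'.card ≤ j ∧ ¬ CI {y} {l.get ⟨j, hj⟩} B' := by
  classical
  -- Composition over a nonempty finset of singletons
  have comp_fin : ∀ (R T : Finset ι), T.Nonempty → (∀ z ∈ T, CI {y} {z} R) → CI {y} T R := by
    intro R T
    induction T using Finset.induction_on with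
    | empty => intro h; exact absurd h (by simp)
    | @insert a T ha ih =>
      intro _ hall
      by_cases hT : T = ∅
      · subst hT
        simpa using hall a (Finset.mem_insert_self a ∅)
      · have h1 : CI {y} {a} R := hall a (Finset.mem_insert_self a T)
        have h2 : CI {y} T R :=
          ih (Finset.nonempty_iff_ne_empty.mpr hT)
            (fun z hz => hall z (Finset.mem_insert_of_mem hz))
        have := composition _ _ _ _ h1 h2
        rwa [← Finset.insert_eq] at this
  -- Key step: for any proper subset S of B, some element of B \ S is dependent given S
  have key : ∀ S : Finset ι, S ⊆ B → S ≠ B → ∃ Z ∈ B \ S, ¬ CI {y} {Z} S := by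
    intro S hSB hne
    by_contra h
    push_neg at h
    have hBS : (B \ S).Nonempty := by
      rw [Finset.sdiff_nonempty]
      intro hsub
      exact hne (Finset.Subset.antisymm hSB hsub)
    have h1 : CI {y} (B \ S) S := comp_fin S (B \ S) hBS h
    have h2 : CI {y} {X} S := hmin S (HasSubset.Subset.ssubset_of_ne hSB hne)
    have h3 : CI {y} ({X} ∪ (B \ S)) S := composition _ _ _ _ h2 h1
    have h4 : CI {y} {X} (S ∪ (B \ S)) := weakUnion _ _ _ _ h3
    rw [Finset.union_sdiff_of_subset hSB] at h4
    exact hdep h4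
  -- Build the list greedily
  have aux : ∀ n (S : Finset ι), S ⊆ B → (B \ S).card = n →
      ∃ l : List ι, l.Nodup ∧ l.toFinset = B \ S ∧
        ∀ (j : ℕ) (hj : j < l.length),
          ¬ CI {y} {l.get ⟨j, hj⟩} (S ∪ (l.take j).toFinset) := by
    intro n
    induction n with
    | zero =>
      intro S hS hcard
      refine ⟨[], by simp, ?_, by simp⟩
      simp [Finset.card_eq_zero.mp hcard]
    | succ n ih =>
      intro S hS hcard
      have hne : S ≠ B := by
        intro h
        subst h
        simp at hcard
      obtain ⟨Z, hZmem, hZ⟩ := key S hS hne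
      have hZB : Z ∈ B := (Finset.mem_sdiff.mp hZmem).1
      have hZS : Z ∉ S := (Finset.mem_sdiff.mp hZmem).2
      have hS' : insert Z S ⊆ B := Finset.insert_subset hZB hS
      have hsd : B \ insert Z S = (B \ S).erase Z := by
        ext a
        simp only [Finset.mem_sdiff, Finset.mem_insert, Finset.mem_erase]
        tauto
      have hcard' : (B \ insert Z S).card = n := by
        rw [hsd, Finset.card_erase_of_mem hZmem, hcard]
        omega
      obtain ⟨l, hnd, htf, hprop⟩ := ih (insert Z S) hS' hcard'
      have hZl : Z ∉ l := by
        intro hmem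
        have : Z ∈ B \ insert Z S := by
          rw [← htf]
          exact List.mem_toFinset.mpr hmem
        simp at this
      refine ⟨Z :: l, List.nodup_cons.mpr ⟨hZl, hnd⟩, ?_, ?_⟩
      · rw [List.toFinset_cons, htf]
        ext a
        simp only [Finset.mem_insert, Finset.mem_sdiff]
        constructor
        · rintro (rfl | ⟨h1, h2⟩)
          · exact ⟨hZB, hZS⟩
          · exact ⟨h1, fun hx => h2 (Or.inr hx)⟩
        · rintro ⟨h1, h2⟩
          by_cases haZ : a = Z
          · exact Or.inl haZ
          · exact Or.inr ⟨h1, by tauto⟩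
      · intro j hj
        match j with
        | 0 => simpa using hZ
        | Nat.succ j =>
          have hj' : j < l.length := by simpa using hj
          have := hprop j hj'
          have hrw : insert Z S ∪ (l.take j).toFinset
              = S ∪ ((Z :: l).take (j + 1)).toFinset := by
            simp [List.take_succ_cons, Finset.insert_union, Finset.union_insert]
          rw [hrw] at this
          exact this
  obtain ⟨l, hnd, htf, hprop⟩ := aux B.card ∅ (Finset.empty_subset B) (by simp)
  rw [Finset.sdiff_empty] at htf
  refine ⟨l, hnd, htf, ?_⟩
  intro j hj
  refine ⟨(l.take j).toFinset, ?_, ?_, ?_⟩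
  · intro a ha
    have hal : a ∈ l := List.mem_of_mem_take (List.mem_toFinset.mp ha)
    have haB : a ∈ B := htf ▸ List.mem_toFinset.mpr hal
    have hane : a ≠ l.get ⟨j, hj⟩ := by
      intro h
      exact get_not_mem_take_of_nodup l hnd j hj (h ▸ List.mem_toFinset.mp ha)
    have := hB haB
    rw [Finset.mem_erase] at this ⊢
    exact ⟨hane, this.2⟩
  · calc (l.take j).toFinset.card ≤ (l.take j).length := (l.take j).toFinset_card_le
      _ ≤ j := by simp
  · simpa using hprop j hj
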